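/- Let A and B be m×m dual complex matrices with A invertible (there exists A⁻¹ with A·A⁻¹ = A⁻¹·A = I), let N_B be an NDMPI of B and Z an NDMPI of A·B. If N_B·(A·B)·B* = A·B*, B·N_B·A·B = A·B, and A·B·Z·B = B, then Z = A⁻¹·N_B. -/

import Mathlib

open Matrix

/-- The dual complex numbers ℂ[ε] with ε² = 0 (dual numbers over ℂ). -/
abbrev DualComplex := DualNumber ℂ

/-- Conjugation on dual complex numbers: star (a + b·ε) = (conj a) + (conj b)·ε. -/
noncomputable instance : StarRing DualComplex where
  star x := ⟨star x.fst, star x.snd⟩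
  star_involutive x := TrivSqZeroExt.ext (star_star x.fst) (star_star x.snd)
  star_mul x y := TrivSqZeroExt.ext
    (by simp [TrivSqZeroExt.fst_mul, mul_comm]; exact mul_comm _ _)
    (by simp [TrivSqZeroExt.snd_mul]; erw [TrivSqZeroExt.snd_mul]; simp; ring)
  star_add x y := TrivSqZeroExt.ext (by simp; rfl) (by simp; rfl)

/-- `X` is a new dual Moore–Penrose inverse (NDMPI) of `M`:
`M*·M·X·M·M* = M*·M·M*`, `X·M·X = X`, `(M·X)* = M·X`, `(X·M)* = X·M`. -/
def IsNDMPI {m n : ℕ} (M : Matrix (Fin m) (Fin n) DualComplex)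
    (X : Matrix (Fin n) (Fin m) DualComplex) : Prop :=
  Mᴴ * M * X * M * Mᴴ = Mᴴ * M * Mᴴ ∧
  X * M * X = X ∧
  (M * X)ᴴ = M * X ∧
  (X * M)ᴴ = X * M

/-- If `A` is invertible with inverse `Ainv`, `N_B·(A·B)·B* = A·B*`,
`B·N_B·A·B = A·B` and `A·B·Z·B = B` (where `Z` is an NDMPI of `A·B`),
then `Z = A⁻¹·N_B`. -/
theorem stmt_17 {m : ℕ} (A B : Matrix (Fin m) (Fin m) DualComplex)
    (Ainv : Matrix (Fin m) (Fin m) DualComplex)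
    (hA1 : A * Ainv = 1) (hA2 : Ainv * A = 1)
    (NB : Matrix (Fin m) (Fin m) DualComplex) (hNB : IsNDMPI B NB)
    (Z : Matrix (Fin m) (Fin m) DualComplex) (hZ : IsNDMPI (A * B) Z)
    (h1 : NB * (A * B) * Bᴴ = A * Bᴴ)
    (h2 : B * NB * A * B = A * B)
    (h3 : A * B * Z * B = B) :
    Z = Ainv * NB := by

  obtain ⟨-, hB2, hB3, -⟩ := hNB
  obtain ⟨-, hZ2, hZ3, hZ4⟩ := hZ
  have pq : (A * B * Z) * (B * NB) = B * NB := by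
    calc (A * B * Z) * (B * NB) = (A * B * Z * B) * NB := by noncomm_ring
    _ = B * NB := by rw [h3]
  have qp : (B * NB) * (A * B * Z) = A * B * Z := by
    calc (B * NB) * (A * B * Z) = (B * NB * A * B) * Z := by noncomm_ring
    _ = A * B * Z := by rw [h2]
  have h := congrArg conjTranspose pq
  rw [conjTranspose_mul, hB3, hZ3] at h
  have key : B * NB = A * B * Z := h.symm.trans qp
  have zform : Z = Bᴴ * Aᴴ * Zᴴ * Z := by
    calc Z = Z * (A * B) * Z := hZ2.symm
    _ = (Z * (A * B))ᴴ * Z := by rw [hZ4]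
    _ = Bᴴ * Aᴴ * Zᴴ * Z := by rw [conjTranspose_mul, conjTranspose_mul]
  have haz : NB * A * B * Z = A * Z := by
    calc NB * A * B * Z = NB * A * B * (Bᴴ * Aᴴ * Zᴴ * Z) := by rw [← zform]
    _ = (NB * (A * B) * Bᴴ) * (Aᴴ * Zᴴ * Z) := by noncomm_ring
    _ = (A * Bᴴ) * (Aᴴ * Zᴴ * Z) := by rw [h1]
    _ = A * (Bᴴ * Aᴴ * Zᴴ * Z) := by noncomm_ring
    _ = A * Z := by rw [← zform]
  calc Z = (Ainv * A) * Z := by rw [hA2, one_mul]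
  _ = Ainv * (A * Z) := by noncomm_ring
  _ = Ainv * (NB * A * B * Z) := by rw [haz]
  _ = Ainv * (NB * (A * B * Z)) := by noncomm_ring
  _ = Ainv * (NB * (B * NB)) := by rw [key]
  _ = Ainv * (NB * B * NB) := by noncomm_ring
  _ = Ainv * NB := by rw [hB2]
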